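/- Let 1 ≤ q < ∞ and suppose q is not an even integer. Let X_2 := {t ↦ α·sin t + β·cos t : α, β ∈ ℝ}, a two-dimensional subspace of functions on the circle [0,2π). Then for every m ∈ ℕ there do not exist points ξ^1,…,ξ^m ∈ [0,2π) and real weights λ_1,…,λ_m such that (1/2π)·∫_0^{2π} |f(t)|^q dt = Σ_{ν=1}^m λ_ν |f(ξ^ν)|^q for all f ∈ X_2. -/

import Mathlib

open MeasureTheory Real Filter Topology

namespace NoExactDiscretizationAux

/-- Iterated derivative of `μ|x|^q` on the right half line. -/
lemma iter_right (μ q : ℝ) (n : ℕ) : ∀ x : ℝ, 0 < x →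
    iteratedDeriv n (fun y : ℝ => μ * |y| ^ q) x
      = μ * (∏ i ∈ Finset.range n, (q - i)) * x ^ (q - n) := by
  induction n with
  | zero =>
    intro x hx
    simp [abs_of_pos hx]
  | succ n ih =>
    intro x hx
    rw [iteratedDeriv_succ]
    have hev : iteratedDeriv n (fun y : ℝ => μ * |y| ^ q)
        =ᶠ[𝓝 x] fun y => μ * (∏ i ∈ Finset.range n, (q - i)) * y ^ (q - n) := by
      filter_upwards [isOpen_Ioi.mem_nhds hx] with y hy using ih y hy
    rw [hev.deriv_eq]
    have hd : HasDerivAt (fun y : ℝ => μ * (∏ i ∈ Finset.range n, (q - i)) * y ^ (q - n))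
        (μ * (∏ i ∈ Finset.range n, (q - i)) * ((q - n) * x ^ (q - n - 1))) x :=
      (Real.hasDerivAt_rpow_const (Or.inl hx.ne')).const_mul _
    rw [hd.deriv, Finset.prod_range_succ]
    have h1 : q - (n + 1 : ℕ) = q - n - 1 := by push_cast; ring
    rw [h1]; ring

lemma continuousAt_iteratedDeriv_of_contDiffAt {f : ℝ → ℝ} {x : ℝ} (n : ℕ)
    (h : ContDiffAt ℝ (⊤ : ℕ∞) f x) : ContinuousAt (iteratedDeriv n f) x := by
  obtain ⟨u, hu, hcd⟩ := h.contDiffOn (m := (n : WithTop ℕ∞)) (by exact_mod_cast le_top)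
    (by simp)
  have hxv : x ∈ interior u := mem_interior_iff_mem_nhds.2 hu
  have hv : IsOpen (interior u) := isOpen_interior
  have hcd' : ContDiffOn ℝ n f (interior u) := hcd.mono interior_subset
  have hcont : ContinuousOn (iteratedDerivWithin n f (interior u)) (interior u) :=
    hcd'.continuousOn_iteratedDerivWithin le_rfl hv.uniqueDiffOn
  have heq : iteratedDeriv n f =ᶠ[𝓝 x] iteratedDerivWithin n f (interior u) := by
    filter_upwards [hv.mem_nhds hxv] with y hy
    rw [iteratedDerivWithin, iteratedDeriv, iteratedFDerivWithin_of_isOpen n hv hy]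
  exact (hcont.continuousAt (hv.mem_nhds hxv)).congr heq.symm

lemma iter_left (μ q : ℝ) (n : ℕ) : ∀ x : ℝ, x < 0 →
    iteratedDeriv n (fun y : ℝ => μ * |y| ^ q) x
      = (-1 : ℝ) ^ n * (μ * (∏ i ∈ Finset.range n, (q - i)) * (-x) ^ (q - n)) := by
  intro x hx
  have hsymm : (fun y : ℝ => μ * |y| ^ q) = (fun y : ℝ => μ * |(-y)| ^ q) := by
    funext y; rw [abs_neg]
  have := iteratedDeriv_comp_neg n (fun y : ℝ => μ * |y| ^ q) x
  rw [← hsymm] at this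
  rw [this, smul_eq_mul, iter_right μ q n (-x) (by linarith)]

/-- Key lemma: if `μ |x|^q` is smooth at `0` with `1 ≤ q` not an even integer, then `μ = 0`. -/
lemma key0 {q μ : ℝ} (hq : 1 ≤ q) (hqne : ¬ ∃ k : ℤ, Even k ∧ q = (k : ℝ))
    (h : ContDiffAt ℝ (⊤ : ℕ∞) (fun y : ℝ => μ * |y| ^ q) 0) : μ = 0 := by
  by_contra hμ
  set g := fun y : ℝ => μ * |y| ^ q with hg
  by_cases hint : ∃ k : ℤ, q = (k : ℝ)
  · obtain ⟨k, hk⟩ := hint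
    have hkodd : Odd k := (Int.even_or_odd k).resolve_left fun he => hqne ⟨k, he, hk⟩
    have hk1 : (1 : ℝ) ≤ (k : ℝ) := hk ▸ hq
    have hk1' : 1 ≤ k := by exact_mod_cast hk1
    set n := k.toNat with hn
    have hkn : (k : ℝ) = (n : ℝ) := by
      rw [hn]; norm_cast; omega
    have hqn : q = (n : ℝ) := hk.trans hkn
    have hnodd : Odd n := by
      rcases hkodd with ⟨j, hj⟩
      exact ⟨j.toNat, by omega⟩
    set P := ∏ i ∈ Finset.range n, (q - i) with hP
    have hPpos : 0 < P := by
      apply Finset.prod_pos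
      intro i hi
      have : i < n := Finset.mem_range.1 hi
      rw [hqn]
      have : (i : ℝ) < (n : ℝ) := by exact_mod_cast this
      linarith
    have hco : ContinuousAt (iteratedDeriv n g) 0 := continuousAt_iteratedDeriv_of_contDiffAt n h
    have hqn0 : q - (n : ℝ) = 0 := by rw [hqn]; ring
    have hright : iteratedDeriv n g =ᶠ[𝓝[>] (0:ℝ)] fun _ => μ * P := by
      filter_upwards [self_mem_nhdsWithin] with x hx
      rw [iter_right μ q n x hx, hqn0, Real.rpow_zero, mul_one]
    have hleft : iteratedDeriv n g =ᶠ[𝓝[<] (0:ℝ)] fun _ => -(μ * P) := by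
      filter_upwards [self_mem_nhdsWithin] with x hx
      rw [iter_left μ q n x hx, hqn0, Real.rpow_zero, mul_one, hnodd.neg_one_pow]
      ring
    have ht1 : Tendsto (iteratedDeriv n g) (𝓝[>] (0:ℝ)) (𝓝 (iteratedDeriv n g 0)) :=
      (hco.continuousWithinAt).tendsto
    have ht2 : Tendsto (iteratedDeriv n g) (𝓝[<] (0:ℝ)) (𝓝 (iteratedDeriv n g 0)) :=
      (hco.continuousWithinAt).tendsto
    have e1 : iteratedDeriv n g 0 = μ * P :=
      tendsto_nhds_unique ht1 (tendsto_const_nhds.congr' hright.symm)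
    have e2 : iteratedDeriv n g 0 = -(μ * P) :=
      tendsto_nhds_unique ht2 (tendsto_const_nhds.congr' hleft.symm)
    have : μ * P = 0 := by linarith [e1.symm.trans e2]
    rcases mul_eq_zero.1 this with h' | h'
    · exact hμ h'
    · exact hPpos.ne' h'
  · -- q is not an integer
    set n := ⌈q⌉₊ with hn
    have hq0 : (0 : ℝ) < q := by linarith
    have hqlt : q < (n : ℝ) := lt_of_le_of_ne (Nat.le_ceil q) fun h' => hint ⟨n, by exact_mod_cast h'⟩
    set P := ∏ i ∈ Finset.range n, (q - i) with hP
    have hPne : P ≠ 0 := by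
      apply Finset.prod_ne_zero_iff.2
      intro i _
      exact sub_ne_zero.2 fun h' => hint ⟨i, by exact_mod_cast h'⟩
    have hCne : μ * P ≠ 0 := mul_ne_zero hμ hPne
    have hco : ContinuousAt (iteratedDeriv n g) 0 := continuousAt_iteratedDeriv_of_contDiffAt n h
    -- |iteratedDeriv n g| tends to a finite limit along 𝓝[>]0 …
    have ht1 : Tendsto (fun x => |iteratedDeriv n g x|) (𝓝[>] (0:ℝ))
        (𝓝 |iteratedDeriv n g 0|) :=
      ((continuous_abs.continuousAt.comp hco).continuousWithinAt).tendsto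
    -- … but also to atTop
    have hblow : Tendsto (fun x : ℝ => x ^ (q - n)) (𝓝[>] (0:ℝ)) atTop := by
      have h1 : Tendsto (fun x : ℝ => (x⁻¹) ^ ((n : ℝ) - q)) (𝓝[>] (0:ℝ)) atTop :=
        (tendsto_rpow_atTop (by linarith)).comp tendsto_inv_nhdsGT_zero
      refine h1.congr' ?_
      filter_upwards [self_mem_nhdsWithin] with x hx
      rw [Real.inv_rpow (le_of_lt hx), ← Real.rpow_neg (le_of_lt hx), neg_sub]
    have hev : (fun x => |iteratedDeriv n g x|) =ᶠ[𝓝[>] (0:ℝ)]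
        fun x => |μ * P| * x ^ (q - n) := by
      filter_upwards [self_mem_nhdsWithin] with x hx
      rw [iter_right μ q n x hx, abs_mul, abs_of_pos (Real.rpow_pos_of_pos hx _)]
    have ht2 : Tendsto (fun x => |iteratedDeriv n g x|) (𝓝[>] (0:ℝ)) atTop :=
      ((hblow.const_mul_atTop (abs_pos.2 hCne)).congr' hev.symm)
    exact not_tendsto_nhds_of_tendsto_atTop ht2 _ ht1

lemma key {q μ t0 : ℝ} (hq : 1 ≤ q) (hqne : ¬ ∃ k : ℤ, Even k ∧ q = (k : ℝ))
    {f : ℝ → ℝ} (hf : ContDiffAt ℝ (⊤ : ℕ∞) f t0)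
    (heq : ∀ x, f x = μ * |x - t0| ^ q) : μ = 0 := by
  apply key0 hq hqne (μ := μ)
  have h1 : (fun y : ℝ => μ * |y| ^ q) = fun y : ℝ => f (y + t0) := by
    funext y; rw [heq]; simp
  rw [h1]
  have h2 : ContDiffAt ℝ (⊤ : ℕ∞) (fun y : ℝ => y + t0) 0 :=
    (contDiff_id.add contDiff_const).contDiffAt
  exact ContDiffAt.comp (g := f) (f := fun y : ℝ => y + t0) (0 : ℝ) (by simpa using hf) h2


lemma integral_rot (q : ℝ) (hq : 1 ≤ q) (α : ℝ) :
    (∫ t in (0:ℝ)..(2*π), |α * Real.sin t + Real.cos t| ^ q)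
      = (α^2+1) ^ (q/2) * ∫ t in (0:ℝ)..(2*π), |Real.sin t| ^ q := by
  set z : ℂ := ⟨α, 1⟩ with hzdef
  have hz : z ≠ 0 := by
    intro h
    have := congrArg Complex.im h
    simp [hzdef] at this
  set r := ‖z‖ with hrdef
  have hr : 0 < r := norm_pos_iff.mpr hz
  have hcos : Real.cos z.arg = α / r := by rw [Complex.cos_arg hz]
  have hsin : Real.sin z.arg = 1 / r := by rw [Complex.sin_arg]
  have hpt : ∀ t, |α * Real.sin t + Real.cos t| ^ q
      = r ^ q * |Real.sin (t + z.arg)| ^ q := by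
    intro t
    have h1 : r * Real.sin (t + z.arg) = α * Real.sin t + Real.cos t := by
      rw [Real.sin_add, hcos, hsin]
      field_simp
    rw [← h1, abs_mul, abs_of_pos hr, Real.mul_rpow hr.le (abs_nonneg _)]
  rw [intervalIntegral.integral_congr (g := fun t => r ^ q * |Real.sin (t + z.arg)| ^ q)
    (fun t _ => hpt t)]
  rw [intervalIntegral.integral_const_mul]
  have hshift : (∫ t in (0:ℝ)..(2*π), |Real.sin (t + z.arg)| ^ q)
      = ∫ t in (0:ℝ)..(2*π), |Real.sin t| ^ q := by
    rw [intervalIntegral.integral_comp_add_right (fun u => |Real.sin u| ^ q) z.arg]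
    have hper : Function.Periodic (fun u : ℝ => |Real.sin u| ^ q) (2*π) := by
      intro u; simp [Real.sin_add_two_pi]
    have h2 := hper.intervalIntegral_add_eq z.arg 0
    simp only [zero_add] at h2
    rw [show (0:ℝ) + z.arg = z.arg by ring, show 2*π + z.arg = z.arg + 2*π by ring, h2]
  rw [hshift]
  congr 1
  have hr2 : r = Real.sqrt (α^2+1) := by
    rw [hrdef, Complex.norm_def]
    congr 1
    simp [Complex.normSq_apply, hzdef]
    ring
  rw [hr2, Real.sqrt_eq_rpow, ← Real.rpow_mul (by positivity)]
  norm_num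
  rw [mul_comm, mul_one_div]

lemma cont_integrand (q : ℝ) (hq : 1 ≤ q) : Continuous (fun u : ℝ => |Real.sin u| ^ q) := by
  rw [continuous_iff_continuousAt]
  intro x
  exact (Real.continuousAt_rpow_const _ _ (Or.inr (by linarith))).comp
    (Real.continuous_sin.abs.continuousAt)

lemma integral_pos (q : ℝ) (hq : 1 ≤ q) :
    0 < ∫ t in (0:ℝ)..(2*π), |Real.sin t| ^ q := by
  have hc := cont_integrand q hq
  have hpi := Real.pi_pos
  have hint : ∀ a b : ℝ, IntervalIntegrable (fun u : ℝ => |Real.sin u| ^ q) volume a b :=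
    fun a b => hc.intervalIntegrable a b
  have hsplit : (∫ t in (0:ℝ)..(2*π), |Real.sin t| ^ q)
      = (∫ t in (0:ℝ)..(π/6), |Real.sin t| ^ q) + ((∫ t in (π/6:ℝ)..(π/2), |Real.sin t| ^ q)
        + ∫ t in (π/2:ℝ)..(2*π), |Real.sin t| ^ q) := by
    rw [intervalIntegral.integral_add_adjacent_intervals (hint _ _) (hint _ _),
      intervalIntegral.integral_add_adjacent_intervals (hint _ _) (hint _ _)]
  have h1 : 0 ≤ ∫ t in (0:ℝ)..(π/6), |Real.sin t| ^ q :=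
    intervalIntegral.integral_nonneg (by linarith) fun u _ => by positivity
  have h3 : 0 ≤ ∫ t in (π/2:ℝ)..(2*π), |Real.sin t| ^ q :=
    intervalIntegral.integral_nonneg (by linarith) fun u _ => by positivity
  have h2 : (π/2 - π/6) * (1/2 : ℝ) ^ q ≤ ∫ t in (π/6:ℝ)..(π/2), |Real.sin t| ^ q := by
    have := intervalIntegral.integral_mono_on (a := π/6) (b := π/2)
      (f := fun _ : ℝ => (1/2 : ℝ) ^ q) (g := fun u : ℝ => |Real.sin u| ^ q)
      (by linarith) (intervalIntegrable_const) (hint _ _) ?_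
    · simpa using this
    · intro u hu
      have hu1 : π/6 ≤ u := hu.1
      have hu2 : u ≤ π/2 := hu.2
      have hs : (1/2 : ℝ) ≤ Real.sin u := by
        have := Real.strictMonoOn_sin.monotoneOn (a := π/6) (b := u)
          ⟨by linarith, by linarith⟩ ⟨by linarith, by linarith⟩ hu1
        rwa [Real.sin_pi_div_six] at this
      have : (1/2 : ℝ) ≤ |Real.sin u| := le_trans hs (le_abs_self _)
      exact Real.rpow_le_rpow (by norm_num) this (by linarith)
  have hpos : 0 < (π/2 - π/6) * (1/2 : ℝ) ^ q := by
    have : (0:ℝ) < (1/2 : ℝ) ^ q := Real.rpow_pos_of_pos (by norm_num) q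
    nlinarith
  linarith [hsplit]

end NoExactDiscretizationAux

open NoExactDiscretizationAux in
/-- **No exact weighted discretization in `L_q` for non-even `q`** for
`X_2 = span{sin, cos}` on the circle `[0,2π)` with normalized Lebesgue measure:
if `1 ≤ q < ∞` is not an even integer, then for every `m` there are no nodes
`ξ^1,…,ξ^m ∈ [0,2π)` and real weights `λ_1,…,λ_m` with
`(1/2π)·∫_0^{2π} |α sin t + β cos t|^q dt = ∑_ν λ_ν |α sin ξ^ν + β cos ξ^ν|^q`
for all `α, β ∈ ℝ`. -/
theorem no_exact_weighted_discretization_noneven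
    (q : ℝ) (hq : 1 ≤ q) (hqne : ¬ ∃ k : ℤ, Even k ∧ q = (k : ℝ)) (m : ℕ) :
    ¬ ∃ (ξ : Fin m → ℝ) (lam : Fin m → ℝ),
        (∀ ν, ξ ν ∈ Set.Ico (0 : ℝ) (2 * π)) ∧
        ∀ α β : ℝ,
          (1 / (2 * π)) * (∫ t in (0:ℝ)..(2 * π), |α * Real.sin t + β * Real.cos t| ^ q)
            = ∑ ν, lam ν * |α * Real.sin (ξ ν) + β * Real.cos (ξ ν)| ^ q := by
  rintro ⟨ξ, lam, hmem, heq⟩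
  have hpi := Real.pi_pos
  have hq0 : (0:ℝ) < q := by linarith
  set s : Fin m → ℝ := fun ν => Real.sin (ξ ν) with hs
  set cc : Fin m → ℝ := fun ν => Real.cos (ξ ν) with hcc
  set J : ℝ := ∫ t in (0:ℝ)..(2*π), |Real.sin t| ^ q with hJdef
  have hJ : 0 < J := integral_pos q hq
  set c' : ℝ := (1/(2*π)) * J with hc'def
  have hc' : 0 < c' := by positivity
  -- the discretization identity, specialized to β = 1
  have h1 : ∀ α : ℝ, c' * (α^2+1) ^ (q/2) = ∑ ν, lam ν * |α * s ν + cc ν| ^ q := by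
    intro α
    have h := heq α 1
    simp only [one_mul] at h
    rw [integral_rot q hq α] at h
    rw [← h, hc'def]; ring
  -- all group coefficients vanish
  have hgrp : ∀ t0 : ℝ,
      (∑ ν ∈ Finset.univ.filter (fun ν => s ν ≠ 0 ∧ cc ν = -t0 * s ν), lam ν * |s ν| ^ q) = 0 := by
    intro t0
    set G := Finset.univ.filter (fun ν => s ν ≠ 0 ∧ cc ν = -t0 * s ν) with hG
    apply key (t0 := t0) hq hqne
      (f := fun α => c' * (α^2+1) ^ (q/2)
        - ∑ ν ∈ Finset.univ.filter (fun ν => ¬(s ν ≠ 0 ∧ cc ν = -t0 * s ν)),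
            lam ν * |α * s ν + cc ν| ^ q)
    · -- smoothness at t0
      apply ContDiffAt.sub
      · apply ContDiffAt.mul contDiffAt_const
        apply ContDiffAt.rpow_const_of_ne (f := fun α : ℝ => α^2+1)
        · exact ((contDiff_id.pow 2).add contDiff_const).contDiffAt
        · nlinarith [sq_nonneg t0]
      · apply ContDiffAt.sum
        intro ν hν
        rw [Finset.mem_filter] at hν
        by_cases hsν : s ν = 0
        · apply (contDiffAt_const (c := lam ν * |cc ν| ^ q)).congr_of_eventuallyEq
          apply Filter.Eventually.of_forall
          intro y
          simp [hsν]
        · have hcν : cc ν ≠ -t0 * s ν := fun h => hν.2 ⟨hsν, h⟩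
          have hval : t0 * s ν + cc ν ≠ 0 := by
            intro h
            apply hcν
            linarith
          apply ContDiffAt.mul contDiffAt_const
          apply ContDiffAt.rpow_const_of_ne (f := fun α : ℝ => |α * s ν + cc ν|)
          · exact (contDiffAt_abs hval).comp t0
              (((contDiff_id.mul contDiff_const).add contDiff_const).contDiffAt)
          · simpa [abs_ne_zero] using hval
    · -- the function equals μ * |x - t0|^q
      intro x
      have hsplit := Finset.sum_filter_add_sum_filter_not Finset.univ
        (fun ν => s ν ≠ 0 ∧ cc ν = -t0 * s ν) (fun ν => lam ν * |x * s ν + cc ν| ^ q)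
      have hx := h1 x
      have hGsum : (∑ ν ∈ G, lam ν * |x * s ν + cc ν| ^ q)
          = (∑ ν ∈ G, lam ν * |s ν| ^ q) * |x - t0| ^ q := by
        rw [Finset.sum_mul]
        apply Finset.sum_congr rfl
        intro ν hν
        rw [hG, Finset.mem_filter] at hν
        have h2 : x * s ν + cc ν = s ν * (x - t0) := by rw [hν.2.2]; ring
        rw [h2, abs_mul, Real.mul_rpow (abs_nonneg _) (abs_nonneg _)]
        ring
      rw [sub_eq_iff_eq_add, hx, ← hsplit, ← hGsum]
  -- hence the weighted sum is constant in α
  have hK : ∀ α : ℝ, (∑ ν, lam ν * |α * s ν + cc ν| ^ q)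
      = ∑ ν ∈ Finset.univ.filter (fun ν => s ν = 0), lam ν * |cc ν| ^ q := by
    intro α
    rw [← Finset.sum_filter_add_sum_filter_not Finset.univ (fun ν => s ν = 0)
      (fun ν => lam ν * |α * s ν + cc ν| ^ q)]
    have e1 : (∑ ν ∈ Finset.univ.filter (fun ν => s ν = 0), lam ν * |α * s ν + cc ν| ^ q)
        = ∑ ν ∈ Finset.univ.filter (fun ν => s ν = 0), lam ν * |cc ν| ^ q := by
      apply Finset.sum_congr rfl
      intro ν hν
      rw [Finset.mem_filter] at hν
      simp [hν.2]
    have e2 : (∑ ν ∈ Finset.univ.filter (fun ν => ¬(s ν = 0)), lam ν * |α * s ν + cc ν| ^ q)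
        = 0 := by
      set P := Finset.univ.filter (fun ν : Fin m => ¬(s ν = 0)) with hP
      rw [← Finset.sum_fiberwise_of_maps_to (g := fun ν => -cc ν / s ν)
        (t := P.image (fun ν => -cc ν / s ν)) (fun ν hν => Finset.mem_image_of_mem _ hν)]
      apply Finset.sum_eq_zero
      intro t0 _
      have hset : P.filter (fun ν => -cc ν / s ν = t0)
          = Finset.univ.filter (fun ν => s ν ≠ 0 ∧ cc ν = -t0 * s ν) := by
        ext ν
        simp only [hP, Finset.mem_filter, Finset.mem_univ, true_and]
        constructor
        · rintro ⟨hsν, hdiv⟩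
          refine ⟨hsν, ?_⟩
          field_simp at hdiv
          linarith
        · rintro ⟨hsν, hcν⟩
          refine ⟨hsν, ?_⟩
          rw [hcν]
          field_simp
      rw [hset]
      have : (∑ ν ∈ Finset.univ.filter (fun ν => s ν ≠ 0 ∧ cc ν = -t0 * s ν),
          lam ν * |α * s ν + cc ν| ^ q)
          = (∑ ν ∈ Finset.univ.filter (fun ν => s ν ≠ 0 ∧ cc ν = -t0 * s ν),
              lam ν * |s ν| ^ q) * |α - t0| ^ q := by
        rw [Finset.sum_mul]
        apply Finset.sum_congr rfl
        intro ν hν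
        rw [Finset.mem_filter] at hν
        have h2 : α * s ν + cc ν = s ν * (α - t0) := by rw [hν.2.2]; ring
        rw [h2, abs_mul, Real.mul_rpow (abs_nonneg _) (abs_nonneg _)]
        ring
      rw [this, hgrp t0, zero_mul]
    rw [e1, e2, add_zero]
  -- contradiction
  have hA := (h1 0).trans (hK 0)
  have hB := (h1 1).trans (hK 1)
  rw [← hA] at hB
  have h0 : ((0:ℝ)^2+1) = 1 := by norm_num
  rw [h0, Real.one_rpow, mul_one] at hB
  have h2 : ((1:ℝ)^2+1) = 2 := by norm_num
  rw [h2] at hB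
  have hgt : (1:ℝ) < (2:ℝ) ^ (q/2) := by
    rw [show (1:ℝ) = (2:ℝ) ^ (0:ℝ) by simp]
    exact Real.rpow_lt_rpow_left_iff (by norm_num) |>.2 (by linarith)
  nlinarith
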